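/- Let H be a complex Hilbert space, G ⊆ H a dense subspace, and (φₙ)ₙ∈ℕ, (Ψₙ)ₙ∈ℕ sequences in G which are G-quasi bases, i.e. ⟨f, g⟩ = ∑ₙ ⟨f, Ψₙ⟩⟨φₙ, g⟩ = ∑ₙ ⟨f, φₙ⟩⟨Ψₙ, g⟩ for all f, g ∈ G. Let Θ : G → H be a linear map that is symmetric (⟨Θ f, g⟩ = ⟨f, Θ g⟩ for all f, g ∈ G) and satisfies Ψₙ = Θ φₙ for all n. Then for every nonzero f ∈ G with Θ f ∈ G, the inner product ⟨f, Θ f⟩ is a strictly positive real number. -/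

import Mathlib

/-- If `(φₙ)` and `(Ψₙ)` are `G`-quasi bases for a dense subspace
`G` of a complex Hilbert space, `Θ : G → H` is a symmetric linear map with
`Ψₙ = Θ φₙ` for all `n`, then for every nonzero `f ∈ G` with `Θ f ∈ G`, the
inner product `⟨f, Θ f⟩` is a strictly positive real number. -/
theorem theta_positivity
    {H : Type*} [NormedAddCommGroup H] [InnerProductSpace ℂ H] [CompleteSpace H]
    (G : Submodule ℂ H) (hdense : Dense (G : Set H))
    (φ Ψ : ℕ → G)
    (hquasi1 : ∀ f g : G, (inner ℂ (f : H) (g : H) : ℂ)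
      = ∑' n : ℕ, (inner ℂ (f : H) ((Ψ n : H)) : ℂ) * (inner ℂ ((φ n : H)) (g : H) : ℂ))
    (hquasi2 : ∀ f g : G, (inner ℂ (f : H) (g : H) : ℂ)
      = ∑' n : ℕ, (inner ℂ (f : H) ((φ n : H)) : ℂ) * (inner ℂ ((Ψ n : H)) (g : H) : ℂ))
    (Θ : G →ₗ[ℂ] H)
    (hΘsym : ∀ f g : G, (inner ℂ (Θ f) (g : H) : ℂ) = inner ℂ (f : H) (Θ g))
    (hΨΘ : ∀ n : ℕ, (Ψ n : H) = Θ (φ n)) :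
    ∀ f : G, f ≠ 0 → Θ f ∈ G → ∃ r : ℝ, 0 < r ∧ (inner ℂ (f : H) (Θ f) : ℂ) = (r : ℂ) := by
  -- Key fact: for any g in the domain of the form, ⟨g, Θg⟩ is a nonnegative real.
  have key : ∀ g : G, Θ g ∈ G → ∃ r : ℝ, 0 ≤ r ∧ (inner ℂ (g : H) (Θ g) : ℂ) = (r : ℂ) := by
    intro g hg
    have h1 := hquasi1 g ⟨Θ g, hg⟩
    have hterm : ∀ n : ℕ,
        (inner ℂ (g : H) ((Ψ n : H)) : ℂ) * (inner ℂ ((φ n : H)) (Θ g) : ℂ)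
          = ((Complex.normSq (inner ℂ (g : H) ((Ψ n : H)) : ℂ) : ℝ) : ℂ) := by
      intro n
      have h2 : (inner ℂ ((φ n : H)) (Θ g) : ℂ) = inner ℂ ((Ψ n : H)) (g : H) := by
        rw [← hΘsym (φ n) g, hΨΘ n]
      rw [h2, ← inner_conj_symm ((Ψ n : H)) (g : H), Complex.mul_conj]
    refine ⟨∑' n : ℕ, Complex.normSq (inner ℂ (g : H) ((Ψ n : H)) : ℂ),
      tsum_nonneg fun n => Complex.normSq_nonneg _, ?_⟩
    rw [show (inner ℂ (g : H) (Θ g) : ℂ)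
        = inner ℂ (g : H) ((⟨Θ g, hg⟩ : G) : H) from rfl, h1, Complex.ofReal_tsum]
    exact tsum_congr hterm
  intro f hf hTf
  obtain ⟨s, hs0, hsval⟩ := key f hTf
  rcases hs0.lt_or_eq with hlt | heq
  · exact ⟨s, hlt, hsval⟩
  -- Degenerate case: ⟨f, Θf⟩ = 0; derive f = 0, a contradiction.
  exfalso
  have hB : (inner ℂ (f : H) (Θ f) : ℂ) = 0 := by rw [hsval, ← heq]; norm_num
  -- Cauchy–Schwarz style argument: ⟨φ n, Θ f⟩ = 0 for every n.
  have hz : ∀ n : ℕ, (inner ℂ ((φ n : H)) (Θ f) : ℂ) = 0 := by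
    intro n
    by_contra hzne
    set z : ℂ := inner ℂ ((φ n : H)) (Θ f) with hzdef
    have hφmem : Θ (φ n) ∈ G := by rw [← hΨΘ n]; exact (Ψ n).2
    obtain ⟨β, hβ0, hβval⟩ := key (φ n) hφmem
    set t : ℝ := 1 / (β + 1) with htdef
    have ht0 : 0 < t := by positivity
    set c : ℂ := -((t : ℂ) * z) with hcdef
    set h : G := f + c • φ n with hhdef
    have hTh : Θ h ∈ G := by
      rw [hhdef, map_add, map_smul]
      exact G.add_mem hTf (G.smul_mem c hφmem)
    obtain ⟨r, hr0, hrval⟩ := key h hTh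
    have hconj : (inner ℂ (f : H) (Θ (φ n)) : ℂ) = starRingEnd ℂ z := by
      rw [← inner_conj_symm, hΘsym (φ n) f, hzdef]
    have hexp : (inner ℂ (h : H) (Θ h) : ℂ)
        = inner ℂ (f : H) (Θ f) + c * inner ℂ (f : H) (Θ (φ n))
          + starRingEnd ℂ c * inner ℂ ((φ n : H)) (Θ f)
          + starRingEnd ℂ c * c * inner ℂ ((φ n : H)) (Θ (φ n)) := by
      have hcoe : (h : H) = (f : H) + c • ((φ n : H)) := by rw [hhdef]; push_cast; ring_nf
      have hΘh : Θ h = Θ f + c • Θ (φ n) := by rw [hhdef, map_add, map_smul]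
      rw [hcoe, hΘh]
      simp only [inner_add_left, inner_add_right, inner_smul_left, inner_smul_right]
      ring_nf
    have hval : (inner ℂ (h : H) (Θ h) : ℂ)
        = ((Complex.normSq z * (t * t * β - 2 * t) : ℝ) : ℂ) := by
      rw [hexp, hB, hconj, hβval, ← hzdef, hcdef]
      simp only [map_neg, map_mul, Complex.conj_ofReal]
      push_cast
      linear_combination ((t : ℂ) * (t : ℂ) * (β : ℂ) - 2 * (t : ℂ)) * Complex.mul_conj z
    have hreq : r = Complex.normSq z * (t * t * β - 2 * t) := by
      have : ((r : ℝ) : ℂ) = ((Complex.normSq z * (t * t * β - 2 * t) : ℝ) : ℂ) := by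
        rw [← hrval, hval]
      exact_mod_cast this
    have hNpos : 0 < Complex.normSq z := Complex.normSq_pos.2 hzne
    have htβ : t * β < 1 := by
      rw [htdef, div_mul_eq_mul_div, one_mul, div_lt_one (by linarith)]
      linarith
    nlinarith [hr0, hreq, mul_pos ht0 hNpos]
  -- hence ⟨Ψ n, f⟩ = 0 for all n, so f ⟂ G, so f = 0 by density.
  have hΨf : ∀ n : ℕ, (inner ℂ ((Ψ n : H)) (f : H) : ℂ) = 0 := by
    intro n
    rw [hΨΘ n, hΘsym (φ n) f]
    exact hz n
  have hperp : ∀ v : G, (inner ℂ (f : H) (v : H) : ℂ) = 0 := by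
    intro v
    have hq := hquasi2 v f
    simp only [hΨf, mul_zero, tsum_zero] at hq
    rw [← inner_conj_symm, hq, map_zero]
  have : (f : H) = 0 := hdense.eq_zero_of_inner_left (𝕜 := ℂ) (fun v hv => hperp ⟨v, hv⟩)
  exact hf (Subtype.ext this)
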